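/- Let k ≥ 1 be odd and let f ∈ ℤ[x] be a monic irreducible polynomial of degree n having exactly k roots of maximal modulus (counted with multiplicity). Then k divides n. -/

import Mathlib

open Polynomial

private lemma aux_prod_le (m : Multiset ℝ) (r : ℝ) (h0 : ∀ x ∈ m, 0 ≤ x)
    (h1 : ∀ x ∈ m, x ≤ r) : 0 ≤ m.prod ∧ m.prod ≤ r ^ Multiset.card m := by
  induction m using Multiset.induction_on with
  | empty => simp
  | cons a s ih =>
    have ha0 : 0 ≤ a := h0 a (Multiset.mem_cons_self a s)
    have har : a ≤ r := h1 a (Multiset.mem_cons_self a s)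
    obtain ⟨hs0, hs1⟩ := ih (fun x hx => h0 x (Multiset.mem_cons_of_mem hx))
      (fun x hx => h1 x (Multiset.mem_cons_of_mem hx))
    constructor
    · simpa using mul_nonneg ha0 hs0
    · simp only [Multiset.prod_cons, Multiset.card_cons, pow_succ']
      exact mul_le_mul har hs1 hs0 (le_trans ha0 har)

private lemma aux_prod_eq (m : Multiset ℝ) (r : ℝ) (hr : 0 < r) (h0 : ∀ x ∈ m, 0 ≤ x)
    (h1 : ∀ x ∈ m, x ≤ r) (hp : m.prod = r ^ Multiset.card m) : ∀ x ∈ m, x = r := by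
  induction m using Multiset.induction_on with
  | empty => simp
  | cons a s ih =>
    have ha0 : 0 ≤ a := h0 a (Multiset.mem_cons_self a s)
    have har : a ≤ r := h1 a (Multiset.mem_cons_self a s)
    have hs0 : ∀ x ∈ s, 0 ≤ x := fun x hx => h0 x (Multiset.mem_cons_of_mem hx)
    have hs1 : ∀ x ∈ s, x ≤ r := fun x hx => h1 x (Multiset.mem_cons_of_mem hx)
    obtain ⟨hsp0, hsp1⟩ := aux_prod_le s r hs0 hs1
    have hpc : a * s.prod = r ^ (Multiset.card s + 1) := by
      simpa [Multiset.prod_cons] using hp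
    have ha : a = r := by
      by_contra hne
      have halt : a < r := lt_of_le_of_ne har hne
      have : a * s.prod < r ^ (Multiset.card s + 1) := by
        calc a * s.prod ≤ a * r ^ Multiset.card s := by
              exact mul_le_mul_of_nonneg_left hsp1 ha0
          _ < r * r ^ Multiset.card s := by
              exact mul_lt_mul_of_pos_right halt (pow_pos hr _)
          _ = r ^ (Multiset.card s + 1) := by ring
      exact absurd hpc (ne_of_lt this)
    have hsprod : s.prod = r ^ Multiset.card s := by
      have := hpc
      rw [ha] at this
      have h2 : r * s.prod = r * r ^ Multiset.card s := by
        rw [this]; ring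
      exact mul_left_cancel₀ (ne_of_gt hr) h2
    intro x hx
    rcases Multiset.mem_cons.mp hx with h | h
    · rw [h, ha]
    · exact ih hs0 hs1 hsprod x h

private lemma aux_invol {α : Type*} [DecidableEq α] (g : α → α) (hg : Function.Involutive g) :
    ∀ s : Finset α, (∀ x ∈ s, g x ∈ s) → Odd s.card → ∃ a ∈ s, g a = a := by
  intro s
  induction s using Finset.strongInduction with
  | _ s ih =>
    intro hcl hodd
    by_contra hno
    push_neg at hno
    have hne : s.Nonempty := by
      rcases Finset.eq_empty_or_nonempty s with h | h
      · subst h; simp at hodd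
      · exact h
    obtain ⟨x, hx⟩ := hne
    have hgx : g x ∈ s := hcl x hx
    have hgxne : g x ≠ x := fun h => hno x hx h
    set s' := (s.erase x).erase (g x) with hs'
    have hsub : s' ⊆ s := fun y hy =>
      Finset.mem_of_mem_erase (Finset.mem_of_mem_erase hy)
    have hss : s' ⊂ s := Finset.ssubset_of_ssubset_of_subset
      (Finset.erase_ssubset (Finset.mem_erase.mpr ⟨hgxne, hgx⟩)) (Finset.erase_subset _ _)
    have hcard : s'.card = s.card - 2 := by
      rw [hs', Finset.card_erase_of_mem (Finset.mem_erase.mpr ⟨hgxne, hgx⟩),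
        Finset.card_erase_of_mem hx]
      omega
    have hcl' : ∀ y ∈ s', g y ∈ s' := by
      intro y hy
      have hys : y ∈ s := hsub hy
      have hyne : y ≠ x := by
        intro h; subst h
        exact (Finset.mem_erase.mp (Finset.mem_erase.mp hy).2).1 rfl
      have hygx : y ≠ g x := (Finset.mem_erase.mp hy).1
      refine Finset.mem_erase.mpr ⟨?_, Finset.mem_erase.mpr ⟨?_, hcl y hys⟩⟩
      · intro h
        exact hyne (by rw [← hg x, ← h, hg y])
      · intro h
        exact hygx (by rw [← hg y, h])
    have hodd' : Odd s'.card := by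
      rw [hcard]
      obtain ⟨m, hm⟩ := hodd
      have h2 : 2 ≤ s.card := by
        have := Finset.card_le_card (Finset.insert_subset hx (Finset.singleton_subset_iff.mpr hgx) : ({x, g x} : Finset α) ⊆ s)
        simpa [Finset.card_insert_of_notMem, hgxne.symm] using this
      exact ⟨m - 1, by omega⟩
    obtain ⟨a, ha, hga⟩ := ih s' hss hcl' hodd'
    exact hno a (hsub ha) hga


set_option maxHeartbeats 1600000 in
theorem stmt14 (k n : ℕ) (hk : Odd k) (hk1 : 1 ≤ k)
    (f : Polynomial ℤ) (hm : f.Monic) (hirr : Irreducible f) (hdeg : f.natDegree = n)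
    (r : ℝ)
    (hr : ∀ z ∈ (f.map (Int.castRingHom ℂ)).roots, ‖z‖ ≤ r)
    (hattain : ∃ z ∈ (f.map (Int.castRingHom ℂ)).roots, ‖z‖ = r)
    (hcard : ((f.map (Int.castRingHom ℂ)).roots.filter
      (fun z => ‖z‖ = r)).card = k) :
    k ∣ n := by
  classical
  set fC := f.map (Int.castRingHom ℂ) with hfCdef
  set p : ℚ[X] := f.map (algebraMap ℤ ℚ) with hpdef
  have hpm : p.Monic := hm.map _
  have hpirr : Irreducible p :=
    (hm.irreducible_iff_irreducible_map_fraction_map (K := ℚ)).mp hirr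
  have hpsep : p.Separable := hpirr.separable
  have hfCp : fC = p.map (algebraMap ℚ ℂ) := by
    rw [hpdef, hfCdef, Polynomial.map_map]
    congr 1
  have hpdeg : p.natDegree = n := by
    rw [hpdef, hm.natDegree_map, hdeg]
  -- splits
  have hsplC : (p.map (algebraMap ℚ ℂ)).Splits := IsAlgClosed.splits _
  set K := IntermediateField.adjoin ℚ (p.rootSet ℂ) with hKdef
  haveI hKsf : p.IsSplittingField ℚ K :=
    IntermediateField.adjoin_rootSet_isSplittingField hsplC
  haveI : Normal ℚ K := Normal.of_isSplittingField p
  haveI : FiniteDimensional ℚ K := Polynomial.IsSplittingField.finiteDimensional K p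
  clear hKdef
  clear_value K
  -- complex roots multiset as image of roots in K
  have hRmap : fC.roots = (p.aroots K).map (algebraMap K ℂ) := by
    rw [hfCp]
    have h1 : p.map (algebraMap ℚ ℂ) = (p.map (algebraMap ℚ K)).map (algebraMap K ℂ) := by
      rw [Polynomial.map_map (algebraMap ℚ ↥K) (algebraMap ↥K ℂ) p,
        ← IsScalarTower.algebraMap_eq ℚ ↥K ℂ]
    rw [h1, Polynomial.Splits.roots_map (Polynomial.IsSplittingField.splits K p) _]
  have hRKcard : Multiset.card (p.aroots K) = n := by
    have h := Polynomial.Splits.natDegree_eq_card_roots (Polynomial.IsSplittingField.splits K p)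
    rw [hpm.natDegree_map, hpdeg] at h
    exact h.symm
  have hRKnodup : (p.aroots K).Nodup := Polynomial.nodup_roots hpsep.map
  set SK := (p.aroots K).filter (fun x => ‖algebraMap K ℂ x‖ = r) with hSKdef
  set S := fC.roots.filter (fun z => ‖z‖ = r) with hSdef
  have hSmap : S = SK.map (algebraMap K ℂ) := by
    rw [hSdef, hRmap, Multiset.filter_map, hSKdef]
    exact congrArg _ (Multiset.filter_congr (fun x _ => Iff.rfl))
  have hSKcard : Multiset.card SK = k := by
    have : Multiset.card S = k := hcard
    rwa [hSmap, Multiset.card_map] at this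
  -- conjugation closure
  have hfCconj : fC.map (starRingEnd ℂ) = fC := by
    rw [hfCdef, Polynomial.map_map]
    congr 1
    exact Subsingleton.elim _ _
  clear hfCdef hpdef
  clear_value fC p
  have hRconj : fC.roots.map (starRingEnd ℂ) = fC.roots := by
    conv_rhs => rw [← hfCconj]
    rw [Polynomial.Splits.roots_map (IsAlgClosed.splits fC) _]
  have hSconj : S.map (starRingEnd ℂ) = S := by
    have h1 : Multiset.filter (fun z => ‖z‖ = r) (fC.roots.map (starRingEnd ℂ))
        = S.map (starRingEnd ℂ) := by
      rw [Multiset.filter_map, hSdef]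
      refine congrArg _ (Multiset.filter_congr (fun x _ => ?_))
      simp [Complex.norm_conj]
    rw [← h1, hRconj]
  -- roots are nodup
  have hRnodup : fC.roots.Nodup := by
    rw [hfCp]; exact Polynomial.nodup_roots hpsep.map
  have hSnodup : S.Nodup := hRnodup.filter _
  -- find real root of max modulus
  have hconj_mem : ∀ x ∈ S.toFinset, (starRingEnd ℂ) x ∈ S.toFinset := by
    intro x hx
    rw [Multiset.mem_toFinset] at hx ⊢
    rw [← hSconj]
    exact Multiset.mem_map_of_mem _ hx
  have hodd' : Odd S.toFinset.card := by
    rw [Multiset.toFinset_card_of_nodup hSnodup, hcard]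
    exact hk
  obtain ⟨a, haS', haconj⟩ := aux_invol (starRingEnd ℂ)
    (fun z => Complex.conj_conj z) S.toFinset hconj_mem hodd'
  rw [Multiset.mem_toFinset] at haS'
  have habs : ‖a‖ = r := (Multiset.mem_filter.mp haS').2
  -- the product of max modulus roots
  have htconj : (starRingEnd ℂ) S.prod = S.prod := by
    rw [← Multiset.prod_hom S (starRingEnd ℂ), hSconj]
  have htabs : ‖S.prod‖ = r ^ k := by
    have h1 : ‖S.prod‖ = (S.map (‖·‖)).prod := map_multiset_prod normHom S
    have h2 : S.map (‖·‖) = Multiset.replicate k r := by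
      apply Multiset.eq_replicate.mpr
      constructor
      · rw [Multiset.card_map, hcard]
      · intro b hb
        obtain ⟨z, hz, hzb⟩ := Multiset.mem_map.mp hb
        rw [← hzb]
        exact (Multiset.mem_filter.mp hz).2
    rw [h1, h2, Multiset.prod_replicate]
  -- dispatch the degenerate case r = 0
  obtain ⟨z0, hz0R, hz0r⟩ := hattain
  have hr0 : 0 ≤ r := hz0r ▸ norm_nonneg z0
  rcases eq_or_lt_of_le hr0 with hr0' | hrpos
  · have hall : ∀ z ∈ fC.roots, ‖z‖ = r := fun z hz =>
      le_antisymm (hr z hz) (hr0' ▸ norm_nonneg z)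
    have hSR : S = fC.roots := by
      rw [hSdef]; exact Multiset.filter_eq_self.mpr hall
    have hn : Multiset.card fC.roots = n := by rw [hRmap, Multiset.card_map, hRKcard]
    have hkn : k = n := by rw [← hcard, hSR, hn]
    exact hkn ▸ dvd_refl k
  -- now r > 0
  set t := S.prod with htdef
  have haR : (a.re : ℂ) = a := Complex.conj_eq_iff_re.mp haconj
  have htR : ((t.re : ℝ) : ℂ) = t := Complex.conj_eq_iff_re.mp htconj
  have hare : |a.re| = r := by
    have h := congrArg (‖·‖) haR
    rw [Complex.norm_real, Real.norm_eq_abs] at h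
    rw [h, habs]
  have htre : |t.re| = r ^ k := by
    have h := congrArg (‖·‖) htR
    rw [Complex.norm_real, Real.norm_eq_abs] at h
    rw [h, htabs]
  have hare' : |a.re ^ k| = r ^ k := by rw [abs_pow, hare]
  have hcasesR : t.re = a.re ^ k ∨ t.re = -(a.re ^ k) :=
    abs_eq_abs.mp (by rw [htre, hare'])
  have hcases : t = a ^ k ∨ t = - a ^ k := by
    rcases hcasesR with h | h
    · left
      rw [← htR, h]
      push_cast
      rw [haR]
    · right
      rw [← htR, h]
      push_cast
      rw [haR]
  -- lift a to K
  have haSK : ∃ aK ∈ SK, algebraMap K ℂ aK = a := by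
    have := haS'
    rw [hSmap] at this
    obtain ⟨aK, h1, h2⟩ := Multiset.mem_map.mp this
    exact ⟨aK, h1, h2⟩
  obtain ⟨aK, haKS, haKval⟩ := haSK
  have htK : algebraMap K ℂ SK.prod = t := by
    rw [htdef, hSmap]
    exact map_multiset_prod (algebraMap K ℂ) SK
  have hKcases : SK.prod = aK ^ k ∨ SK.prod = - aK ^ k := by
    rcases hcases with h | h
    · left
      apply (algebraMap K ℂ).injective
      rw [htK, h, map_pow, haKval]
    · right
      apply (algebraMap K ℂ).injective
      rw [htK, h, map_neg, map_pow, haKval]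
  -- Galois automorphisms permute the roots
  have hstab : ∀ (σ : K ≃ₐ[ℚ] K), (p.aroots K).map σ = p.aroots K := by
    intro σ
    have h1 : (p.map (algebraMap ℚ K)).map (σ : ↥K →+* ↥K) = p.map (algebraMap ℚ K) := by
      rw [Polynomial.map_map]
      congr 1
      exact σ.toAlgHom.comp_algebraMap
    have h2 := Polynomial.Splits.roots_map (Polynomial.IsSplittingField.splits K p) (σ : ↥K →+* ↥K)
    rw [h1] at h2
    exact h2.symm
  have hroot_mem : ∀ (σ : K ≃ₐ[ℚ] K) (x : K), x ∈ p.aroots K → σ x ∈ p.aroots K := by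
    intro σ x hx
    rw [← hstab σ]
    exact Multiset.mem_map_of_mem _ hx
  have habs_le : ∀ x ∈ p.aroots K, ‖algebraMap K ℂ x‖ ≤ r := by
    intro x hx
    apply hr
    rw [hRmap]
    exact Multiset.mem_map_of_mem _ hx
  -- key lemma: if σ sends aK into SK, then σ maps SK into SK
  have key : ∀ σ : K ≃ₐ[ℚ] K, σ aK ∈ SK → ∀ x ∈ SK, σ x ∈ SK := by
    intro σ hσ x hx
    have hσabs : ‖algebraMap K ℂ (σ aK)‖ = r := (Multiset.mem_filter.mp hσ).2
    have e1 : σ SK.prod = (SK.map σ).prod := map_multiset_prod σ SK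
    have e2 : ‖algebraMap K ℂ (σ SK.prod)‖ = r ^ k := by
      rcases hKcases with h | h
      · rw [h, map_pow, map_pow, norm_pow, hσabs]
      · rw [h, map_neg, map_neg, norm_neg, map_pow, map_pow, norm_pow, hσabs]
    have e3 : ‖algebraMap K ℂ (σ SK.prod)‖
        = (SK.map (fun y => ‖algebraMap K ℂ (σ y)‖)).prod := by
      rw [e1, map_multiset_prod (algebraMap K ℂ), show ∀ m : Multiset ℂ, ‖m.prod‖ = (m.map (‖·‖)).prod from
          fun m => map_multiset_prod (normHom : ℂ →*₀ ℝ) m,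
        Multiset.map_map, Multiset.map_map]
      rfl
    have hprod : (SK.map (fun y => ‖algebraMap K ℂ (σ y)‖)).prod
        = r ^ Multiset.card (SK.map (fun y => ‖algebraMap K ℂ (σ y)‖)) := by
      rw [Multiset.card_map, hSKcard, ← e3, e2]
    have hall := aux_prod_eq _ r hrpos
      (fun u hu => by
        obtain ⟨y, hy, hyu⟩ := Multiset.mem_map.mp hu
        rw [← hyu]; exact norm_nonneg _)
      (fun u hu => by
        obtain ⟨y, hy, hyu⟩ := Multiset.mem_map.mp hu
        rw [← hyu]
        exact habs_le _ (hroot_mem σ y (Multiset.mem_of_mem_filter hy)))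
      hprod
    have hx' : ‖algebraMap K ℂ (σ x)‖ = r :=
      hall _ (Multiset.mem_map_of_mem _ hx)
    exact Multiset.mem_filter.mpr ⟨hroot_mem σ x (Multiset.mem_of_mem_filter hx), hx'⟩
  -- inverse closure
  have hkey_inv : ∀ σ : K ≃ₐ[ℚ] K, σ aK ∈ SK → σ⁻¹ aK ∈ SK := by
    intro σ hσ
    have himg : SK.toFinset.image σ = SK.toFinset := by
      apply Finset.eq_of_subset_of_card_le
      · intro y hy
        obtain ⟨x, hx, hxy⟩ := Finset.mem_image.mp hy
        rw [Multiset.mem_toFinset] at hx ⊢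
        rw [← hxy]
        exact key σ hσ x hx
      · rw [Finset.card_image_of_injective _ σ.injective]
    have haimg : aK ∈ SK.toFinset.image σ := by
      rw [himg, Multiset.mem_toFinset]; exact haKS
    obtain ⟨x, hx, hxa⟩ := Finset.mem_image.mp haimg
    rw [Multiset.mem_toFinset] at hx
    have hinv : σ⁻¹ aK = x := by
      rw [← hxa]
      exact σ.symm_apply_apply x
    rw [hinv]
    exact hx
  -- the subgroup of automorphisms sending aK into SK
  let H : Subgroup (K ≃ₐ[ℚ] K) :=
    { carrier := {σ | σ aK ∈ SK}
      one_mem' := haKS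
      mul_mem' := by
        intro σ τ hσ hτ
        simp only [Set.mem_setOf_eq] at *
        exact key σ hσ _ hτ
      inv_mem' := by
        intro σ hσ
        simp only [Set.mem_setOf_eq] at *
        exact hkey_inv σ hσ }
  -- transitivity
  have haroot : aK ∈ p.aroots K := Multiset.mem_of_mem_filter haKS
  have hma : minpoly ℚ aK = p :=
    (minpoly.eq_of_irreducible_of_monic hpirr ((Polynomial.mem_aroots.mp haroot).2) hpm).symm
  have htrans : ∀ x ∈ p.aroots K, ∃ σ : K ≃ₐ[ℚ] K, σ aK = x := by
    intro x hx
    have hmx : minpoly ℚ x = p :=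
      (minpoly.eq_of_irreducible_of_monic hpirr ((Polynomial.mem_aroots.mp hx).2) hpm).symm
    have hconj : IsConjRoot ℚ x aK := hmx.trans hma.symm
    exact IsConjRoot.exists_algEquiv hconj
  -- orbits
  have horbG : MulAction.orbit (K ≃ₐ[ℚ] K) aK = {x : ↥K | x ∈ p.aroots K} := by
    ext x
    constructor
    · rintro ⟨σ, rfl⟩
      exact hroot_mem σ aK haroot
    · intro hx
      obtain ⟨σ, hσ⟩ := htrans x hx
      exact ⟨σ, hσ⟩
  have horbH : MulAction.orbit H aK = {x : ↥K | x ∈ SK} := by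
    ext x
    constructor
    · rintro ⟨⟨σ, hσH⟩, rfl⟩
      exact hσH
    · intro hx
      obtain ⟨σ, hσ⟩ := htrans x (Multiset.mem_of_mem_filter hx)
      have hσH : σ ∈ H := by
        show σ aK ∈ SK
        rw [hσ]; exact hx
      exact ⟨⟨σ, hσH⟩, hσ⟩
  -- orbit-stabilizer counting
  have hOS1 := Nat.card_congr (MulAction.orbitProdStabilizerEquivGroup (K ≃ₐ[ℚ] K) aK)
  rw [Nat.card_prod] at hOS1
  have hOS2 := Nat.card_congr (MulAction.orbitProdStabilizerEquivGroup H aK)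
  rw [Nat.card_prod] at hOS2
  have hc1 : Nat.card (MulAction.orbit (K ≃ₐ[ℚ] K) aK) = n := by
    rw [horbG]
    have e : {x : ↥K | x ∈ p.aroots K} = ↑(p.aroots K).toFinset := by
      ext x; simp [Multiset.mem_toFinset]
    rw [e, Nat.card_coe_set_eq, Set.ncard_coe_finset,
      Multiset.toFinset_card_of_nodup hRKnodup, hRKcard]
  have hc2 : Nat.card (MulAction.orbit H aK) = k := by
    rw [horbH]
    have e : {x : ↥K | x ∈ SK} = ↑SK.toFinset := by
      ext x; simp [Multiset.mem_toFinset]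
    rw [e, Nat.card_coe_set_eq, Set.ncard_coe_finset,
      Multiset.toFinset_card_of_nodup (hRKnodup.filter _), hSKcard]
  -- stabilizers agree
  have hstabeq : Nat.card (MulAction.stabilizer H aK)
      = Nat.card (MulAction.stabilizer (K ≃ₐ[ℚ] K) aK) := by
    apply Nat.card_congr
    refine ⟨fun x => ⟨x.1.1, x.2⟩, fun σ => ⟨⟨σ.1, ?_⟩, ?_⟩, fun x => rfl, fun σ => rfl⟩
    · show σ.1 aK ∈ SK
      have : σ.1 aK = aK := σ.2
      rw [this]; exact haKS
    · exact σ.2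
  have hdvd : Nat.card H ∣ Nat.card (K ≃ₐ[ℚ] K) := Subgroup.card_subgroup_dvd_card H
  rw [← hOS1, ← hOS2, hc1, hc2, hstabeq] at hdvd
  have hspos : 0 < Nat.card (MulAction.stabilizer (K ≃ₐ[ℚ] K) aK) := Nat.card_pos
  exact (Nat.mul_dvd_mul_iff_right hspos).mp hdvd
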